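/- For any fixed h ∈ (0,1), the supremum over q ∈ [0,1/2] of U_N(q) = -h(1-q)^N + (1-h)(P[Binom(2N,q)<N] + (1/2)P[Binom(2N,q)=N]) converges to 1-h as N → ∞, and U_N(q) ≤ 1-h for all q and N. -/

import Mathlib

noncomputable def binomPMF (n : ℕ) (p : ℝ) (k : ℕ) : ℝ :=
  (n.choose k : ℝ) * p ^ k * (1 - p) ^ (n - k)

noncomputable def U (N : ℕ) (h q : ℝ) : ℝ :=
  -h * (1 - q) ^ N
    + (1 - h) * ((∑ k ∈ Finset.range N, binomPMF (2*N) q k)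
        + (1/2) * binomPMF (2*N) q N)

lemma binomPMF_nonneg (n : ℕ) (p : ℝ) (hp0 : 0 ≤ p) (hp1 : p ≤ 1) (k : ℕ) :
    0 ≤ binomPMF n p k := by
  unfold binomPMF
  have : (0:ℝ) ≤ 1 - p := by linarith
  positivity

lemma binomPMF_sum (n : ℕ) (p : ℝ) :
    ∑ k ∈ Finset.range (n+1), binomPMF n p k = 1 := by
  have h := add_pow p (1-p) n
  rw [show p + (1-p) = 1 by ring, one_pow] at h
  rw [h]
  apply Finset.sum_congr rfl
  intro k _
  unfold binomPMF
  ring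

lemma tail_bound (N : ℕ) :
    ∑ k ∈ Finset.Ico N (2*N+1), binomPMF (2*N) (1/4) k ≤ (3/4)^N := by
  have step1 : ∀ k ∈ Finset.Ico N (2*N+1),
      binomPMF (2*N) (1/4) k ≤ ((2*N).choose k : ℝ) * ((3/4)^(2*N) * (1/3)^N) := by
    intro k hk
    simp only [Finset.mem_Ico] at hk
    obtain ⟨hNk, hk2N⟩ := hk
    have hk2N' : k ≤ 2*N := by omega
    unfold binomPMF
    have heq : (1/4:ℝ)^k * (3/4)^(2*N - k) = (3/4)^(2*N) * (1/3)^k := by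
      have : (3/4:ℝ)^(2*N) = (3/4)^k * (3/4)^(2*N-k) := by
        rw [← pow_add]; congr 1; omega
      rw [this]
      have : (1/4:ℝ)^k = (1/3)^k * (3/4)^k := by
        rw [← mul_pow]; norm_num
      rw [this]; ring
    have hle : ((1/3:ℝ))^k ≤ (1/3)^N := by
      apply pow_le_pow_of_le_one (by norm_num) (by norm_num) hNk
    have : (1/4:ℝ)^k * (1 - 1/4)^(2*N-k) ≤ (3/4)^(2*N) * (1/3)^N := by
      rw [show (1 - 1/4 : ℝ) = 3/4 by norm_num, heq]
      have h34 : (0:ℝ) ≤ (3/4)^(2*N) := by positivity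
      exact mul_le_mul_of_nonneg_left hle h34
    calc ((2*N).choose k : ℝ) * (1/4)^k * (1 - 1/4)^(2*N-k)
        = ((2*N).choose k : ℝ) * ((1/4)^k * (1 - 1/4)^(2*N-k)) := by ring
      _ ≤ ((2*N).choose k : ℝ) * ((3/4)^(2*N) * (1/3)^N) := by
          exact mul_le_mul_of_nonneg_left this (by positivity)
  calc ∑ k ∈ Finset.Ico N (2*N+1), binomPMF (2*N) (1/4) k
      ≤ ∑ k ∈ Finset.Ico N (2*N+1), ((2*N).choose k : ℝ) * ((3/4)^(2*N) * (1/3)^N) :=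
        Finset.sum_le_sum step1
    _ ≤ ∑ k ∈ Finset.range (2*N+1), ((2*N).choose k : ℝ) * ((3/4)^(2*N) * (1/3)^N) := by
        apply Finset.sum_le_sum_of_subset_of_nonneg
        · rw [Finset.range_eq_Ico]; exact Finset.Ico_subset_Ico (Nat.zero_le _) le_rfl
        · intro k _ _; positivity
    _ = (2:ℝ)^(2*N) * ((3/4)^(2*N) * (1/3)^N) := by
        rw [← Finset.sum_mul]
        congr 1
        rw [← Nat.cast_sum]
        rw [Nat.sum_range_choose]
        push_cast
        ring
    _ = (3/4)^N := by
        rw [← mul_assoc, ← mul_pow, pow_mul, ← mul_pow]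
        norm_num

lemma U_lower (N : ℕ) (h : ℝ) (hh1 : h ≤ 1) :
    (1 - h) - (3/4)^N ≤ U N h (1/4) := by
  have hsum := binomPMF_sum (2*N) (1/4)
  have hsplit : ∑ k ∈ Finset.range (2*N+1), binomPMF (2*N) (1/4) k
      = (∑ k ∈ Finset.range N, binomPMF (2*N) (1/4) k)
        + ∑ k ∈ Finset.Ico N (2*N+1), binomPMF (2*N) (1/4) k := by
    rw [Finset.range_eq_Ico, Finset.range_eq_Ico]
    exact (Finset.sum_Ico_consecutive (binomPMF (2*N) (1/4)) (Nat.zero_le N) (by omega : N ≤ 2*N+1)).symm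
  have htail := tail_bound N
  have hS : 1 - (3/4)^N ≤ ∑ k ∈ Finset.range N, binomPMF (2*N) (1/4) k := by
    have := hsplit ▸ hsum
    linarith
  have hpmfN : 0 ≤ binomPMF (2*N) (1/4) N :=
    binomPMF_nonneg _ _ (by norm_num) (by norm_num) N
  unfold U
  have hq : (1 - 1/4 : ℝ)^N = (3/4)^N := by norm_num
  rw [hq]
  nlinarith [pow_nonneg (by norm_num : (0:ℝ) ≤ 3/4) N]

lemma U_le (N : ℕ) (h : ℝ) (hh : h ∈ Set.Ioo (0:ℝ) 1) (q : ℝ)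
    (hq : q ∈ Set.Icc (0:ℝ) (1/2)) : U N h q ≤ 1 - h := by
  obtain ⟨hq0, hq2⟩ := hq
  have hq1 : q ≤ 1 := by linarith
  have hsum := binomPMF_sum (2*N) q
  have hnn : ∀ k, 0 ≤ binomPMF (2*N) q k := binomPMF_nonneg _ _ hq0 hq1
  have hS : (∑ k ∈ Finset.range N, binomPMF (2*N) q k)
      + (1/2) * binomPMF (2*N) q N ≤ 1 := by
    have h1 : (∑ k ∈ Finset.range N, binomPMF (2*N) q k) + binomPMF (2*N) q N
        = ∑ k ∈ Finset.range (N+1), binomPMF (2*N) q k := (Finset.sum_range_succ _ N).symm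
    have h2 : ∑ k ∈ Finset.range (N+1), binomPMF (2*N) q k
        ≤ ∑ k ∈ Finset.range (2*N+1), binomPMF (2*N) q k := by
      apply Finset.sum_le_sum_of_subset_of_nonneg
      · exact Finset.range_subset_range.mpr (by omega)
      · intro k _ _; exact hnn k
    nlinarith [hnn N]
  have hpow : 0 ≤ (1 - q)^N := pow_nonneg (by linarith) N
  unfold U
  nlinarith [hh.1, hh.2, hS]

/-- For fixed h ∈ (0,1): U_N(q) ≤ 1-h for every N and q ∈ [0,1/2], and the
supremum of U_N over [0,1/2] converges to 1-h as N → ∞. -/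
theorem stmt_6 (h : ℝ) (hh : h ∈ Set.Ioo (0:ℝ) 1) :
    (∀ N : ℕ, ∀ q ∈ Set.Icc (0:ℝ) (1/2), U N h q ≤ 1 - h) ∧
    Filter.Tendsto (fun N : ℕ => sSup (U N h '' Set.Icc (0:ℝ) (1/2)))
      Filter.atTop (nhds (1 - h)) := by
  refine ⟨fun N q hq => U_le N h hh q hq, ?_⟩
  have hmem : (1/4 : ℝ) ∈ Set.Icc (0:ℝ) (1/2) := by constructor <;> norm_num
  have hne : ∀ N : ℕ, (U N h '' Set.Icc (0:ℝ) (1/2)).Nonempty :=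
    fun N => ⟨U N h (1/4), ⟨1/4, hmem, rfl⟩⟩
  have hbdd : ∀ N : ℕ, BddAbove (U N h '' Set.Icc (0:ℝ) (1/2)) := by
    intro N
    refine ⟨1 - h, ?_⟩
    rintro x ⟨q, hq, rfl⟩
    exact U_le N h hh q hq
  have hub : ∀ N : ℕ, sSup (U N h '' Set.Icc (0:ℝ) (1/2)) ≤ 1 - h := by
    intro N
    apply csSup_le (hne N)
    rintro x ⟨q, hq, rfl⟩
    exact U_le N h hh q hq
  have hlb : ∀ N : ℕ, (1 - h) - (3/4)^N ≤ sSup (U N h '' Set.Icc (0:ℝ) (1/2)) := by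
    intro N
    exact le_trans (U_lower N h (le_of_lt hh.2))
      (le_csSup (hbdd N) ⟨1/4, hmem, rfl⟩)
  have hgl : Filter.Tendsto (fun N : ℕ => (1 - h) - (3/4:ℝ)^N) Filter.atTop (nhds (1 - h)) := by
    have : Filter.Tendsto (fun N : ℕ => ((3:ℝ)/4)^N) Filter.atTop (nhds 0) :=
      tendsto_pow_atTop_nhds_zero_of_lt_one (by norm_num) (by norm_num)
    simpa using (tendsto_const_nhds.sub this)
  exact tendsto_of_tendsto_of_tendsto_of_le_of_le hgl tendsto_const_nhds hlb hub
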